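/- Let G be a graph, C a shortest odd hole in G (an induced odd cycle of length at least 5 of minimum odd length), and v a vertex of G not on C. If R is a path of C of length at least 2 whose ends are adjacent to v and whose internal vertices are all non-adjacent to v, and the length of R is less than |V(C)| - 2, then the length of R is even. -/

import Mathlib

open SimpleGraph

/-- The bull: a triangle 0,1,2 with pendant edges 0–3 and 1–4. -/
def bull : SimpleGraph (Fin 5) :=
  SimpleGraph.fromRel (fun a b =>
    (a, b) ∈ [((0 : Fin 5), (1 : Fin 5)), (0, 2), (1, 2), (0, 3), (1, 4)])

/-- `G` has an induced copy of `H`. -/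
def Contains {V W : Type*} (G : SimpleGraph V) (H : SimpleGraph W) : Prop :=
  Nonempty (H ↪g G)

/-- `G` has an odd hole: an induced cycle of odd length at least 5. -/
def HasOddHole {V : Type*} (G : SimpleGraph V) : Prop :=
  ∃ n, 5 ≤ n ∧ Odd n ∧ Nonempty (SimpleGraph.cycleGraph n ↪g G)

/-- `e` exhibits a shortest odd hole in `G`. -/
def IsShortestOddHole {V : Type*} (G : SimpleGraph V) {k : ℕ}
    (_e : SimpleGraph.cycleGraph k ↪g G) : Prop :=
  5 ≤ k ∧ Odd k ∧ ∀ m, 5 ≤ m → Odd m → Nonempty (SimpleGraph.cycleGraph m ↪g G) → k ≤ m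

/-- The hole given by `e` is clean: the neighbours on the hole of any vertex off the hole
are contained in a two-edge path `i-1, i, i+1` of the hole. -/
def CleanHole {V : Type*} (G : SimpleGraph V) {k : ℕ}
    (e : SimpleGraph.cycleGraph k ↪g G) : Prop :=
  ∀ v : V, (∀ j, e j ≠ v) →
    ∃ i : Fin k, ∀ j, G.Adj v (e j) → j = i ∨ (SimpleGraph.cycleGraph k).Adj i j

/-- `G` is pure: it has no odd hole, or some shortest odd hole of `G` is clean. -/
def IsPure {V : Type*} (G : SimpleGraph V) : Prop :=
  ¬ HasOddHole G ∨
    ∃ (k : ℕ) (e : SimpleGraph.cycleGraph k ↪g G), IsShortestOddHole G e ∧ CleanHole G e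

/-- `p`, `c`, `a` form an anchor in `G`: `p` is an induced 4-vertex path, `c` is complete
to it, and `a` is anticomplete to it. -/
def IsAnchorIn {V : Type*} (G : SimpleGraph V) (p : Fin 4 → V) (c a : V) : Prop :=
  Function.Injective p ∧ (∀ i, c ≠ p i) ∧ (∀ i, a ≠ p i) ∧ a ≠ c ∧
  (∀ i j : Fin 4, G.Adj (p i) (p j) ↔ ((i : ℕ) + 1 = j ∨ (j : ℕ) + 1 = i)) ∧
  (∀ i, G.Adj c (p i)) ∧ (∀ i, ¬ G.Adj a (p i))

/-- `G` contains an anchor. -/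
def ContainsAnchor {V : Type*} (G : SimpleGraph V) : Prop :=
  ∃ p c a, IsAnchorIn G p c a

/-- `X` is a homogeneous set of `G`. -/
def IsHomogeneousSet {V : Type*} [Fintype V] (G : SimpleGraph V) (X : Finset V) : Prop :=
  1 < X.card ∧ X.card < Fintype.card V ∧
    ∀ v ∉ X, (∀ x ∈ X, G.Adj v x) ∨ (∀ x ∈ X, ¬ G.Adj v x)

open Fin.NatCast in
lemma subval {m : ℕ} [NeZero m] (a b : ℕ) (ha : a < m) (hb : b < m) :
    Fin.val ((a : Fin m) - (b : Fin m)) = ((m - b) + a) % m := by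
  rw [Fin.sub_def]
  simp [Fin.val_cast_of_lt ha, Fin.val_cast_of_lt hb]

open Fin.NatCast in
lemma subval_eq_one {m : ℕ} [NeZero m] (hm : 2 ≤ m) (a b : ℕ) (ha : a < m) (hb : b < m) :
    Fin.val ((a : Fin m) - (b : Fin m)) = 1 ↔ (a = b + 1 ∨ (a = 0 ∧ b = m - 1)) := by
  rw [subval a b ha hb]
  rcases Nat.lt_or_ge ((m - b) + a) m with h | h
  · rw [Nat.mod_eq_of_lt h]; omega
  · have h2 : m - b + a - m < m := by omega
    rw [Nat.mod_eq_sub_mod h, Nat.mod_eq_of_lt h2]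
    omega

open Fin.NatCast in
lemma subval' {m : ℕ} [NeZero m] (hm : 2 ≤ m) (a b : Fin m) :
    Fin.val (a - b) = 1 ↔ ((a : ℕ) = (b : ℕ) + 1 ∨ ((a : ℕ) = 0 ∧ (b : ℕ) = m - 1)) := by
  have := subval_eq_one hm (a : ℕ) (b : ℕ) a.isLt b.isLt
  rwa [Fin.cast_val_eq_self, Fin.cast_val_eq_self] at this

open Fin.NatCast in
theorem stmt_0 {V : Type*} (G : SimpleGraph V) (k : ℕ) [NeZero k]
    (e : SimpleGraph.cycleGraph k ↪g G) (he : IsShortestOddHole G e)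
    (v : V) (hv : ∀ j, e j ≠ v)
    (i : Fin k) (L : ℕ) (hL2 : 2 ≤ L) (hLk : L < k - 2)
    (h1 : G.Adj v (e i)) (h2 : G.Adj v (e (i + (L : Fin k))))
    (hint : ∀ t : ℕ, 0 < t → t < L → ¬ G.Adj v (e (i + (t : Fin k)))) :
    Even L := by
  obtain ⟨hk5, hkodd, hmin⟩ := he
  by_contra hE
  have hLodd : Odd L := Nat.not_even_iff_odd.mp hE
  obtain ⟨lm, hlm⟩ := hLodd
  have hL3 : 3 ≤ L := by omega
  have hk2 : 2 ≤ k := by omega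
  have hnk : L + 2 < k := by omega
  have hn2 : 2 ≤ L + 2 := by omega
  -- adjacency along the hole
  have eadj : ∀ a b : ℕ, a ≤ L → b ≤ L →
      (G.Adj (e (i + (a : Fin k))) (e (i + (b : Fin k))) ↔ (a = b + 1 ∨ b = a + 1)) := by
    intro a b ha hb
    rw [e.map_rel_iff, cycleGraph_adj']
    have hsa : (i + (a : Fin k)) - (i + (b : Fin k)) = (a : Fin k) - (b : Fin k) := by abel
    have hsb : (i + (b : Fin k)) - (i + (a : Fin k)) = (b : Fin k) - (a : Fin k) := by abel
    rw [hsa, hsb, subval_eq_one hk2 a b (by omega) (by omega),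
      subval_eq_one hk2 b a (by omega) (by omega)]
    omega
  -- adjacency to v
  have vadj : ∀ b : ℕ, b ≤ L → (G.Adj v (e (i + (b : Fin k))) ↔ (b = 0 ∨ b = L)) := by
    intro b hb
    constructor
    · intro h
      by_contra hc
      push_neg at hc
      exact hint b (by omega) (by omega) h
    · rintro (rfl | rfl)
      · simpa using h1
      · exact h2
  -- build the shorter odd hole
  let f : Fin (L + 2) → V := fun j => if (j : ℕ) = L + 1 then v else e (i + ((j : ℕ) : Fin k))
  have hfinj : Function.Injective f := by
    intro a b hab
    have ha' := a.isLt
    have hb' := b.isLt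
    simp only [f] at hab
    by_cases ha : (a : ℕ) = L + 1 <;> by_cases hb : (b : ℕ) = L + 1
    · exact Fin.ext (by omega)
    · rw [if_pos ha, if_neg hb] at hab
      exact absurd hab.symm (hv _)
    · rw [if_neg ha, if_pos hb] at hab
      exact absurd hab (hv _)
    · rw [if_neg ha, if_neg hb] at hab
      have h3 := add_left_cancel (e.injective hab)
      have h4 := congrArg Fin.val h3
      rw [Fin.val_cast_of_lt (by omega), Fin.val_cast_of_lt (by omega)] at h4
      exact Fin.ext h4
  have hfadj : ∀ a b : Fin (L + 2), G.Adj (f a) (f b) ↔ (cycleGraph (L + 2)).Adj a b := by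
    intro a b
    have ha' := a.isLt
    have hb' := b.isLt
    rw [cycleGraph_adj', subval' hn2 a b, subval' hn2 b a]
    by_cases ha : (a : ℕ) = L + 1 <;> by_cases hb : (b : ℕ) = L + 1
    · simp only [f, if_pos ha, if_pos hb]
      constructor
      · intro h
        exact absurd h (G.irrefl)
      · intro h
        exact absurd h (by omega)
    · simp only [f, if_pos ha, if_neg hb]
      rw [vadj (b : ℕ) (by omega)]
      omega
    · simp only [f, if_neg ha, if_pos hb]
      rw [G.adj_comm, vadj (a : ℕ) (by omega)]
      omega
    · simp only [f, if_neg ha, if_neg hb]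
      rw [eadj (a : ℕ) (b : ℕ) (by omega) (by omega)]
      omega
  have hne : Nonempty (cycleGraph (L + 2) ↪g G) := ⟨⟨⟨f, hfinj⟩, fun {a b} => hfadj a b⟩⟩
  have := hmin (L + 2) (by omega) ⟨lm + 1, by omega⟩ hne
  omega
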